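/- Let f be a slice function on Ω_D with f(D_I) ⊆ ℂ_I^n for some imaginary unit I. Write α = (1/2)(f(z) + f(z̄)) and β = -(I/2)(f(z) - f(z̄)) for z = a + Ib ∈ D_I (with a, b ∈ ℝⁿ). Then both α and β lie in ℂ_I^n, and f(a + Jb) = α + Jβ for every imaginary unit J. -/

import Mathlib

/-- Let `f` be the slice function induced by an even-odd stem pair with
`f(D_I) ⊆ ℂ_I^n` for an imaginary unit `I`. For `z = a + Ib ∈ D_I` set
`A = (1/2)(f(z) + f(z̄))` and `B = -(I/2)(f(z) - f(z̄))`. Then `A, B ∈ ℂ_I^n` and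
`f(a + Jb) = A + J B` for every imaginary unit `J`. -/
theorem stmt9 (n : ℕ) (D : Set (Fin n → ℂ))
    (hD : ∀ z ∈ D, (fun t => (starRingEnd ℂ) (z t)) ∈ D)
    (F₁ F₂ : (Fin n → ℂ) → (Fin n → Quaternion ℝ))
    (heven : ∀ z ∈ D, F₁ (fun t => (starRingEnd ℂ) (z t)) = F₁ z)
    (hodd : ∀ z ∈ D, F₂ (fun t => (starRingEnd ℂ) (z t)) = -F₂ z)
    (f : Quaternion ℝ → (Fin n → ℂ) → (Fin n → Quaternion ℝ))
    (hf : ∀ (L : Quaternion ℝ) (z : Fin n → ℂ) (t : Fin n),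
      f L z t = F₁ z t + L * F₂ z t)
    (I : Quaternion ℝ) (hI : I ^ 2 = -1)
    (hrange : ∀ z ∈ D, ∀ t,
      (∃ x y : ℝ, F₁ z t = (x : Quaternion ℝ) + (y : Quaternion ℝ) * I) ∧
      (∃ x y : ℝ, F₂ z t = (x : Quaternion ℝ) + (y : Quaternion ℝ) * I))
    (a b : Fin n → ℝ)
    (hz : (fun t => (a t : ℂ) + (b t : ℂ) * Complex.I) ∈ D)
    (A B : Fin n → Quaternion ℝ)
    (hA : ∀ t, A t = (1 / 2 : ℝ) •
      (f I (fun t => (a t : ℂ) + (b t : ℂ) * Complex.I) t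
        + f I (fun t => (starRingEnd ℂ) ((a t : ℂ) + (b t : ℂ) * Complex.I)) t))
    (hB : ∀ t, B t = -(I / 2) *
      (f I (fun t => (a t : ℂ) + (b t : ℂ) * Complex.I) t
        - f I (fun t => (starRingEnd ℂ) ((a t : ℂ) + (b t : ℂ) * Complex.I)) t)) :
    (∀ t, (∃ x y : ℝ, A t = (x : Quaternion ℝ) + (y : Quaternion ℝ) * I) ∧
          (∃ x y : ℝ, B t = (x : Quaternion ℝ) + (y : Quaternion ℝ) * I)) ∧
    (∀ J : Quaternion ℝ, J ^ 2 = -1 → ∀ t,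
      f J (fun t => (a t : ℂ) + (b t : ℂ) * Complex.I) t = A t + J * B t) := by
  set z : Fin n → ℂ := fun t => (a t : ℂ) + (b t : ℂ) * Complex.I with hzdef
  have h1 := heven z hz
  have h2 := hodd z hz
  have hA' : ∀ t, A t = F₁ z t := by
    intro t
    rw [hA t, hf, hf]
    have h1' : F₁ (fun t => (starRingEnd ℂ) (z t)) t = F₁ z t := by rw [h1]
    have h2' : F₂ (fun t => (starRingEnd ℂ) (z t)) t = -(F₂ z t) := by
      rw [h2]; rfl
    rw [h1', h2']
    have : F₁ z t + I * F₂ z t + (F₁ z t + I * -F₂ z t) = (2 : ℝ) • F₁ z t := by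
      rw [two_smul, mul_neg]; abel
    rw [this, smul_smul]; norm_num
  have hB' : ∀ t, B t = F₂ z t := by
    intro t
    rw [hB t, hf, hf]
    have h1' : F₁ (fun t => (starRingEnd ℂ) (z t)) t = F₁ z t := by rw [h1]
    have h2' : F₂ (fun t => (starRingEnd ℂ) (z t)) t = -(F₂ z t) := by
      rw [h2]; rfl
    rw [h1', h2']
    have key : F₁ z t + I * F₂ z t - (F₁ z t + I * -F₂ z t) = 2 * (I * F₂ z t) := by
      rw [mul_neg, two_mul]; abel
    rw [key, ← mul_assoc]
    have : -(I / 2) * 2 = -I := by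
      rw [neg_mul, div_mul_cancel₀]
      have h2 : ((2:ℝ) : Quaternion ℝ) ≠ 0 :=
        fun h => (two_ne_zero : (2:ℝ) ≠ 0) (Quaternion.coe_injective h)
      exact fun h => h2 ((show ((2:ℝ) : Quaternion ℝ) = 2 from Quaternion.ext _ _ rfl rfl rfl rfl).trans h)
    rw [this, neg_mul, ← mul_assoc, ← pow_two, hI, neg_one_mul, neg_neg]
  refine ⟨fun t => ⟨?_, ?_⟩, fun J hJ t => ?_⟩
  · rw [hA' t]; exact (hrange z hz t).1
  · rw [hB' t]; exact (hrange z hz t).2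
  · rw [hf, hA' t, hB' t]
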